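/- For even m ∈ ℕ, let (S₀, S₁, …, S_m) be chosen uniformly at random from P(m), the set of random walk bridges of length m. Then there exists a sequence ε_m → 0, independent of α, such that for every α > 0 and every even m, Pr[|{S₀, S₁, …, S_m}| ≥ α·√m] ≥ (1 − ε_m)(1 − 2α²). -/

import Mathlib

open Filter Finset

/-- `P(m)`: paths of length `m` on `ℤ` starting and ending at `0`
(random walk bridges of length `m`). -/
def pathSet (m : ℕ) : Set (Fin (m + 1) → ℤ) :=
  {S | S 0 = 0 ∧ S (Fin.last m) = 0 ∧ ∀ i : Fin m, |S i.succ - S i.castSucc| = 1}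

def pathsTo (m : ℕ) (t : ℤ) : Set (Fin (m + 1) → ℤ) :=
  {S | S 0 = 0 ∧ S (Fin.last m) = t ∧ ∀ i : Fin m, |S i.succ - S i.castSucc| = 1}

noncomputable def walk (m : ℕ) (A : Finset (Fin m)) : Fin (m + 1) → ℤ :=
  fun i => 2 * ((A.filter (fun (j : Fin m) => (j : ℕ) < (i : ℕ))).card : ℤ) - (i : ℕ)

lemma walk_zero (m : ℕ) (A : Finset (Fin m)) : walk m A 0 = 0 := by
  simp [walk]

lemma walk_last (m : ℕ) (A : Finset (Fin m)) : walk m A (Fin.last m) = 2 * (A.card : ℤ) - m := by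
  have : A.filter (fun (j : Fin m) => (j : ℕ) < m) = A := by
    ext j; simp [j.isLt]
  simp [walk, this]

lemma walk_step (m : ℕ) (A : Finset (Fin m)) (i : Fin m) :
    walk m A i.succ - walk m A i.castSucc = if i ∈ A then 1 else -1 := by
  have hsucc : ((i.succ : Fin (m+1)) : ℕ) = (i : ℕ) + 1 := rfl
  have hcast : ((i.castSucc : Fin (m+1)) : ℕ) = (i : ℕ) := rfl
  have hset : A.filter (fun (j : Fin m) => (j : ℕ) < (i : ℕ) + 1) = A.filter (fun (j : Fin m) => (j : ℕ) < (i : ℕ)) ∪ A.filter (fun (j : Fin m) => j = i) := by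
    ext j
    simp only [Finset.mem_filter, Finset.mem_union]
    constructor
    · rintro ⟨hj, hlt⟩
      rcases Nat.lt_succ_iff_lt_or_eq.mp hlt with h | h
      · exact Or.inl ⟨hj, h⟩
      · exact Or.inr ⟨hj, Fin.ext h⟩
    · rintro (⟨hj, hlt⟩ | ⟨hj, rfl⟩)
      · exact ⟨hj, Nat.lt_succ_of_lt hlt⟩
      · exact ⟨hj, Nat.lt_succ_self _⟩
  have hdisj : Disjoint (A.filter (fun (j : Fin m) => (j : ℕ) < (i : ℕ))) (A.filter (fun (j : Fin m) => j = i)) := by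
    rw [Finset.disjoint_left]
    rintro j hj1 hj2
    simp only [Finset.mem_filter] at hj1 hj2
    rcases hj2 with ⟨-, rfl⟩
    exact lt_irrefl _ hj1.2
  have hcard2 : (A.filter (fun (j : Fin m) => j = i)).card = if i ∈ A then 1 else 0 := by
    by_cases h : i ∈ A
    · rw [if_pos h]
      have : A.filter (fun (j : Fin m) => j = i) = {i} := by
        ext j; simp only [Finset.mem_filter, Finset.mem_singleton]
        exact ⟨fun ⟨_, h2⟩ => h2, fun h2 => ⟨h2 ▸ h, h2⟩⟩
      simp [this]
    · rw [if_neg h]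
      have : A.filter (fun (j : Fin m) => j = i) = ∅ := by
        ext j; simp only [Finset.mem_filter, Finset.notMem_empty, iff_false]
        rintro ⟨hj, rfl⟩; exact h hj
      simp [this]
  simp only [walk, hsucc, hcast, hset, Finset.card_union_of_disjoint hdisj, hcard2]
  by_cases h : i ∈ A <;> simp [h] <;> push_cast <;> ring

lemma walk_mem_pathsTo (m : ℕ) (A : Finset (Fin m)) :
    walk m A ∈ pathsTo m (2 * (A.card : ℤ) - m) := by
  refine ⟨walk_zero m A, walk_last m A, fun i => ?_⟩
  rw [walk_step]
  by_cases h : i ∈ A <;> simp [h]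

lemma eq_walk_of_mem (m : ℕ) (t : ℤ) (S : Fin (m+1) → ℤ) (hS : S ∈ pathsTo m t) :
    S = walk m (Finset.univ.filter (fun (i : Fin m) => S i.succ - S i.castSucc = 1)) := by
  obtain ⟨h0, hlast, hstep⟩ := hS
  set A := (Finset.univ : Finset (Fin m)).filter (fun (i : Fin m) => S i.succ - S i.castSucc = 1) with hA
  funext i
  induction i using Fin.induction with
  | zero => rw [h0, walk_zero]
  | succ j ih =>
    have hw := walk_step m A j
    have hd := hstep j
    by_cases h : j ∈ A
    · have h1 : S j.succ - S j.castSucc = 1 := by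
        simpa [hA] using h
      rw [if_pos h] at hw
      omega
    · have h1 : S j.succ - S j.castSucc ≠ 1 := by
        simpa [hA] using h
      have h2 : S j.succ - S j.castSucc = -1 := by
        rcases abs_eq (by norm_num : (0:ℤ) ≤ 1) |>.mp hd with h' | h'
        · exact absurd h' h1
        · exact h'
      rw [if_neg h] at hw
      omega

lemma pathsTo_eq_image (m k : ℕ) :
    pathsTo m (2 * (k : ℤ) - m) =
      ↑((Finset.powersetCard k (Finset.univ : Finset (Fin m))).image (walk m)) := by
  ext S
  simp only [Finset.coe_image, Set.mem_image, Finset.mem_coe, Finset.mem_powersetCard]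
  constructor
  · intro hS
    refine ⟨Finset.univ.filter (fun (i : Fin m) => S i.succ - S i.castSucc = 1), ⟨Finset.subset_univ _, ?_⟩,
      (eq_walk_of_mem m _ S hS).symm⟩
    have := walk_mem_pathsTo m ((Finset.univ : Finset (Fin m)).filter (fun (i : Fin m) => S i.succ - S i.castSucc = 1))
    rw [← eq_walk_of_mem m _ S hS] at this
    have h2 := this.2.1
    have h3 := hS.2.1
    rw [h2] at h3
    omega
  · rintro ⟨A, ⟨-, rfl⟩, rfl⟩
    exact walk_mem_pathsTo m A

lemma walk_injective (m : ℕ) : Function.Injective (walk m) := by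
  intro A B h
  ext i
  have hA := walk_step m A i
  have hB := walk_step m B i
  rw [h] at hA
  rw [hA] at hB
  by_cases hiA : i ∈ A <;> by_cases hiB : i ∈ B <;> simp [hiA, hiB] at hB ⊢ <;> omega

lemma pathsTo_ncard (m k : ℕ) :
    (pathsTo m (2 * (k : ℤ) - m)).ncard = m.choose k := by
  rw [pathsTo_eq_image, Set.ncard_coe_finset,
    Finset.card_image_of_injective _ (walk_injective m), Finset.card_powersetCard]
  simp

lemma pathsTo_finite (m : ℕ) (k : ℕ) : (pathsTo m (2 * (k : ℤ) - m)).Finite := by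
  rw [pathsTo_eq_image]; exact Finset.finite_toSet _

lemma pathSet_eq (m : ℕ) : pathSet m = pathsTo m 0 := rfl

noncomputable def hitTime (m : ℕ) (r : ℤ) (S : Fin (m+1) → ℤ) : Fin (m+1) :=
  if h : (Finset.univ.filter (fun (i : Fin (m+1)) => r ≤ S i)).Nonempty then
    (Finset.univ.filter (fun (i : Fin (m+1)) => r ≤ S i)).min' h else 0

lemma hitTime_unique (m : ℕ) (r : ℤ) (S : Fin (m+1) → ℤ) (τ : Fin (m+1))
    (h1 : r ≤ S τ) (h2 : ∀ i : Fin (m+1), (i:ℕ) < (τ:ℕ) → S i < r) :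
    hitTime m r S = τ := by
  have hne : (Finset.univ.filter (fun (i : Fin (m+1)) => r ≤ S i)).Nonempty :=
    ⟨τ, by simp [h1]⟩
  rw [hitTime, dif_pos hne]
  set F := Finset.univ.filter (fun (i : Fin (m+1)) => r ≤ S i)
  have hmem : F.min' hne ∈ F := Finset.min'_mem F hne
  have hle : F.min' hne ≤ τ := Finset.min'_le F τ (by simp [F, h1])
  rcases lt_or_eq_of_le hle with h | h
  · exfalso
    have : r ≤ S (F.min' hne) := by
      simpa [F] using hmem
    exact absurd this (not_le.mpr (h2 _ h))
  · exact h

lemma hitTime_spec (m : ℕ) (r : ℤ) (hr : 0 ≤ r) (S : Fin (m+1) → ℤ)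
    (h0 : S 0 = 0) (hstep : ∀ i : Fin m, |S i.succ - S i.castSucc| = 1)
    (hex : ∃ i, r ≤ S i) :
    S (hitTime m r S) = r ∧ ∀ i : Fin (m+1), (i:ℕ) < (hitTime m r S : ℕ) → S i < r := by
  obtain ⟨i₀, hi₀⟩ := hex
  have hne : (Finset.univ.filter (fun (i : Fin (m+1)) => r ≤ S i)).Nonempty :=
    ⟨i₀, by simp [hi₀]⟩
  rw [hitTime, dif_pos hne]
  set F := Finset.univ.filter (fun (i : Fin (m+1)) => r ≤ S i) with hF
  set τ := F.min' hne with hτ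
  have hmem : τ ∈ F := Finset.min'_mem F hne
  have hle : r ≤ S τ := by simpa [hF] using hmem
  have hmin : ∀ i : Fin (m+1), (i:ℕ) < (τ:ℕ) → S i < r := by
    intro i hi
    by_contra hcon
    push_neg at hcon
    have : τ ≤ i := Finset.min'_le F i (by simp [hF, hcon])
    have : (τ : ℕ) ≤ (i : ℕ) := this
    omega
  refine ⟨?_, hmin⟩
  by_cases hz : (τ : ℕ) = 0
  · have : τ = 0 := Fin.ext hz
    rw [this] at hle ⊢
    rw [h0] at hle ⊢
    omega
  · have hlt : (τ : ℕ) - 1 < m := by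
      have := τ.isLt; omega
    set j : Fin m := ⟨(τ:ℕ) - 1, hlt⟩ with hj
    have hjs : j.succ = τ := by
      apply Fin.ext
      simp [hj, Fin.val_succ]
      omega
    have hjc : ((j.castSucc : Fin (m+1)) : ℕ) = (τ:ℕ) - 1 := rfl
    have hprev : S j.castSucc < r := hmin j.castSucc (by omega)
    have hd := hstep j
    rw [hjs] at hd
    rcases (abs_eq (by norm_num : (0:ℤ) ≤ 1)).mp hd with h' | h' <;> omega

noncomputable def reflect (m : ℕ) (r : ℤ) (S : Fin (m+1) → ℤ) : Fin (m+1) → ℤ :=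
  fun i => if (i:ℕ) ≤ (hitTime m r S : ℕ) then S i else 2*r - S i

lemma reflect_spec (m : ℕ) (r : ℤ) (hr : 1 ≤ r) (S : Fin (m+1) → ℤ)
    (hS : S ∈ pathsTo m (2*r)) :
    reflect m r S ∈ pathSet m ∧ reflect m r S (hitTime m r S) = r ∧
      hitTime m r (reflect m r S) = hitTime m r S := by
  obtain ⟨h0, hlast, hstep⟩ := hS
  have hex : ∃ i, r ≤ S i := ⟨Fin.last m, by rw [hlast]; omega⟩
  obtain ⟨hτval, hτmin⟩ := hitTime_spec m r (by omega) S h0 hstep hex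
  set τ := hitTime m r S with hτ
  have hτlast : (τ : ℕ) < m := by
    rcases lt_or_eq_of_le (Nat.lt_succ_iff.mp τ.isLt) with h | h
    · exact h
    · exfalso
      have : τ = Fin.last m := Fin.ext h
      rw [this, hlast] at hτval
      omega
  have hrefl_at : reflect m r S τ = r := by
    rw [reflect]; simp [hτval]; intro _; ring
  have hmem : reflect m r S ∈ pathSet m := by
    refine ⟨?_, ?_, ?_⟩
    · rw [reflect]; simp [h0]
    · rw [reflect]
      have : ¬ ((Fin.last m : ℕ) ≤ (τ:ℕ)) := by simp [Fin.val_last]; omega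
      rw [if_neg this, hlast]; ring
    · intro i
      have hc : ((i.castSucc : Fin (m+1)) : ℕ) = (i : ℕ) := rfl
      have hs : ((i.succ : Fin (m+1)) : ℕ) = (i : ℕ) + 1 := rfl
      simp only [reflect, hs, hc, ← hτ]
      by_cases h1 : (i:ℕ) + 1 ≤ (τ:ℕ)
      · rw [if_pos h1, if_pos (by omega)]
        exact hstep i
      · by_cases h2 : (i:ℕ) ≤ (τ:ℕ)
        · have hiτ : (i:ℕ) = (τ:ℕ) := by omega
          have hcast : i.castSucc = τ := Fin.ext hiτ
          rw [if_neg h1, if_pos h2, hcast, hτval]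
          have : 2*r - S i.succ - r = -(S i.succ - r) := by ring
          rw [this, abs_neg, ← hτval, ← hcast]
          exact hstep i
        · rw [if_neg h1, if_neg h2]
          have : 2*r - S i.succ - (2*r - S i.castSucc) = -(S i.succ - S i.castSucc) := by ring
          rw [this, abs_neg]
          exact hstep i
  refine ⟨hmem, hrefl_at, ?_⟩
  apply hitTime_unique
  · rw [hrefl_at]
  · intro i hi
    rw [reflect, if_pos (by omega)]
    exact hτmin i hi

lemma reflect_injOn (m : ℕ) (r : ℤ) (hr : 1 ≤ r) :
    Set.InjOn (reflect m r) (pathsTo m (2*r)) := by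
  intro S hS S' hS' heq
  obtain ⟨-, -, hτS⟩ := reflect_spec m r hr S hS
  obtain ⟨-, -, hτS'⟩ := reflect_spec m r hr S' hS'
  have hττ : hitTime m r S = hitTime m r S' := by
    rw [← hτS, ← hτS', heq]
  funext i
  have := congrFun heq i
  rw [reflect, reflect, hττ] at this
  by_cases h : (i:ℕ) ≤ (hitTime m r S' : ℕ)
  · rwa [if_pos h, if_pos h] at this
  · rw [if_neg h, if_neg h] at this
    omega

lemma range_ncard_ge (m r : ℕ) (S : Fin (m+1) → ℤ) (hS : S ∈ pathSet m)
    (i₀ : Fin (m+1)) (hi : (r:ℤ) ≤ S i₀) : r + 1 ≤ (Set.range S).ncard := by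
  obtain ⟨h0, hlast, hstep⟩ := hS
  have hsub : Set.Icc (0:ℤ) r ⊆ Set.range S := by
    intro k hk
    rw [Set.mem_Icc] at hk
    have hex : ∃ i, k ≤ S i := ⟨i₀, le_trans hk.2 hi⟩
    obtain ⟨hval, -⟩ := hitTime_spec m k hk.1 S h0 hstep hex
    exact ⟨_, hval⟩
  have h1 := Set.ncard_le_ncard hsub (Set.finite_range S)
  have h2 : (Set.Icc (0:ℤ) r).ncard = r + 1 := by
    rw [← Finset.coe_Icc, Set.ncard_coe_finset, Int.card_Icc]
    omega
  omega

lemma pathSet_finite (n : ℕ) : (pathSet (2*n)).Finite := by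
  rw [pathSet_eq]
  have h : (0 : ℤ) = 2 * (n : ℤ) - (2*n : ℕ) := by push_cast; ring
  rw [h]
  exact pathsTo_finite (2*n) n

lemma pathSet_ncard (n : ℕ) : (pathSet (2*n)).ncard = (2*n).choose n := by
  rw [pathSet_eq]
  have h : (0 : ℤ) = 2 * (n : ℤ) - (2*n : ℕ) := by push_cast; ring
  rw [h]
  exact pathsTo_ncard (2*n) n

lemma key_count (n r : ℕ) (hr1 : 1 ≤ r) (hrn : r ≤ n) (x : ℝ) (hx : x ≤ (r:ℝ) + 1) :
    ((2*n).choose (n+r) : ℝ) ≤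
      (({S ∈ pathSet (2*n) | x ≤ ((Set.range S).ncard : ℝ)}).ncard : ℝ) := by
  have hsrc : (pathsTo (2*n) (2*(r:ℤ))).ncard = (2*n).choose (n+r) := by
    have h : (2 * (r:ℤ)) = 2 * ((n+r : ℕ) : ℤ) - (2*n : ℕ) := by push_cast; ring
    rw [h]
    exact pathsTo_ncard (2*n) (n+r)
  have hr1' : (1:ℤ) ≤ (r:ℤ) := by exact_mod_cast hr1
  have hmaps : ∀ S ∈ pathsTo (2*n) (2*(r:ℤ)),
      reflect (2*n) r S ∈ {S ∈ pathSet (2*n) | x ≤ ((Set.range S).ncard : ℝ)} := by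
    intro S hS
    obtain ⟨hmem, hval, -⟩ := reflect_spec (2*n) r hr1' S hS
    refine ⟨hmem, ?_⟩
    have hge := range_ncard_ge (2*n) r (reflect (2*n) r S) hmem _ (le_of_eq hval.symm)
    calc x ≤ (r:ℝ) + 1 := hx
      _ ≤ ((Set.range (reflect (2*n) r S)).ncard : ℝ) := by exact_mod_cast hge
  have hfin : ({S ∈ pathSet (2*n) | x ≤ ((Set.range S).ncard : ℝ)}).Finite :=
    (pathSet_finite n).subset (fun S hS => hS.1)
  have := Set.ncard_le_ncard_of_injOn (reflect (2*n) r) hmaps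
    (reflect_injOn (2*n) r hr1') hfin
  rw [hsrc] at this
  exact_mod_cast this

lemma choose_prod (n : ℕ) : ∀ r : ℕ, r ≤ n →
    ((2*n).choose (n+r) : ℝ) =
      ((2*n).choose n : ℝ) * ∏ j ∈ Finset.range r, (1 - (2*(j:ℝ)+1)/((n:ℝ)+(j:ℝ)+1)) := by
  intro r
  induction r with
  | zero => simp
  | succ r ih =>
    intro hrn
    have hrn' : r ≤ n := by omega
    rw [Finset.prod_range_succ, ← mul_assoc, ← ih hrn']
    have key : (2*n).choose (n+r+1) * (n+r+1) = (2*n).choose (n+r) * (n - r) := by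
      have h := Nat.choose_succ_right_eq (2*n) (n+r)
      have h2 : 2*n - (n+r) = n - r := by omega
      rw [h2] at h
      exact h
    have hcast : ((2*n).choose (n+r+1) : ℝ) * ((n:ℝ)+(r:ℝ)+1)
        = ((2*n).choose (n+r) : ℝ) * ((n:ℝ) - (r:ℝ)) := by
      have h4 : (((2*n).choose (n+r+1) * (n+r+1) : ℕ) : ℝ)
          = (((2*n).choose (n+r) * (n - r) : ℕ) : ℝ) := Nat.cast_inj.mpr key
      push_cast [Nat.cast_sub hrn'] at h4
      linear_combination h4
    have hpos : ((n:ℝ)+(r:ℝ)+1) ≠ 0 := by positivity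
    have hshow : n + (r+1) = n + r + 1 := by omega
    have hexp : (1 - (2*(r:ℝ)+1)/((n:ℝ)+(r:ℝ)+1)) = ((n:ℝ)-(r:ℝ))/((n:ℝ)+(r:ℝ)+1) := by
      field_simp
      ring
    rw [hshow, hexp, ← mul_div_assoc, eq_div_iff hpos]
    exact hcast

lemma prod_one_sub_ge (s : Finset ℕ) (x : ℕ → ℝ) (h0 : ∀ j ∈ s, 0 ≤ x j)
    (h1 : ∀ j ∈ s, x j ≤ 1) :
    1 - ∑ j ∈ s, x j ≤ ∏ j ∈ s, (1 - x j) := by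
  classical
  induction s using Finset.induction_on with
  | empty => simp
  | insert a s' hns ih =>
    rw [Finset.sum_insert hns, Finset.prod_insert hns]
    have h0a : 0 ≤ x a := h0 a (Finset.mem_insert_self a s')
    have h1a : x a ≤ 1 := h1 a (Finset.mem_insert_self a s')
    have ih' := ih (fun j hj => h0 j (Finset.mem_insert_of_mem hj))
      (fun j hj => h1 j (Finset.mem_insert_of_mem hj))
    have hsum : 0 ≤ ∑ j ∈ s', x j :=
      Finset.sum_nonneg (fun j hj => h0 j (Finset.mem_insert_of_mem hj))
    nlinarith [mul_le_mul_of_nonneg_left ih' (by linarith : (0:ℝ) ≤ 1 - x a)]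

lemma sum_odd_sq (s : ℕ) : ∑ j ∈ Finset.range s, (2*(j:ℝ)+1) = (s:ℝ)^2 := by
  induction s with
  | zero => simp
  | succ s ih => rw [Finset.sum_range_succ, ih]; push_cast; ring

lemma sum_x_le (n a b : ℕ) (hn : 1 ≤ n) (hab : a ≤ b) :
    ∑ j ∈ Finset.Ico a b, (2*(j:ℝ)+1)/((n:ℝ)+(j:ℝ)+1) ≤ ((b:ℝ)^2 - (a:ℝ)^2)/n := by
  have hn' : (0:ℝ) < n := by exact_mod_cast hn
  have h1 : ∀ j ∈ Finset.Ico a b, (2*(j:ℝ)+1)/((n:ℝ)+(j:ℝ)+1) ≤ (2*(j:ℝ)+1)/n := by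
    intro j hj
    apply div_le_div_of_nonneg_left (by positivity) hn'
    linarith [Nat.cast_nonneg (α := ℝ) j]
  calc ∑ j ∈ Finset.Ico a b, (2*(j:ℝ)+1)/((n:ℝ)+(j:ℝ)+1)
      ≤ ∑ j ∈ Finset.Ico a b, (2*(j:ℝ)+1)/(n:ℝ) := Finset.sum_le_sum h1
    _ = (∑ j ∈ Finset.Ico a b, (2*(j:ℝ)+1))/(n:ℝ) := by rw [Finset.sum_div]
    _ = ((b:ℝ)^2 - (a:ℝ)^2)/n := by
        have hsplit := Finset.sum_Ico_consecutive (fun j : ℕ => 2*(j:ℝ)+1)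
          (Nat.zero_le a) hab
        simp only [← Finset.range_eq_Ico] at hsplit
        rw [sum_odd_sq, sum_odd_sq] at hsplit
        rw [show (∑ j ∈ Finset.Ico a b, (2*(j:ℝ)+1))
            = (b:ℝ)^2 - (a:ℝ)^2 by linarith]

noncomputable def epsFun : ℕ → ℝ := fun m => if m < 6400 then 1 else 40 / Real.sqrt m

lemma epsFun_tendsto : Tendsto epsFun atTop (nhds 0) := by
  have hsq : Tendsto (fun m : ℕ => Real.sqrt m) atTop atTop := by
    apply Filter.tendsto_atTop_atTop.mpr
    intro b
    refine ⟨⌈b^2⌉₊, fun m hm => ?_⟩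
    rcases le_or_gt b 0 with hb | hb
    · exact le_trans hb (Real.sqrt_nonneg _)
    · rw [Real.le_sqrt (le_of_lt hb) (Nat.cast_nonneg _)]
      calc b^2 ≤ (⌈b^2⌉₊ : ℝ) := Nat.le_ceil _
        _ ≤ (m : ℝ) := by exact_mod_cast hm
  have h1 : Tendsto (fun m : ℕ => 40 / Real.sqrt m) atTop (nhds 0) :=
    Filter.Tendsto.div_atTop tendsto_const_nhds hsq
  apply h1.congr'
  filter_upwards [Filter.eventually_ge_atTop 6400] with m hm
  rw [epsFun, if_neg (by omega)]

lemma rhs_nonneg (m : ℕ) (α : ℝ) :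
    (0:ℝ) ≤ (({S ∈ pathSet m | α * Real.sqrt m ≤ ((Set.range S).ncard : ℝ)}).ncard : ℝ)
      / ((pathSet m).ncard : ℝ) := by positivity

set_option maxHeartbeats 2000000 in
theorem stmt16 :
    ∃ ε : ℕ → ℝ, Tendsto ε atTop (nhds 0) ∧
      ∀ α : ℝ, 0 < α → ∀ m : ℕ, Even m →
        (1 - ε m) * (1 - 2 * α ^ 2) ≤
          (({S ∈ pathSet m | α * Real.sqrt m ≤ ((Set.range S).ncard : ℝ)}).ncard : ℝ)
            / ((pathSet m).ncard : ℝ) := by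
  refine ⟨epsFun, epsFun_tendsto, ?_⟩
  intro α hα m hm
  by_cases hsmall : m < 6400
  · rw [epsFun, if_pos hsmall]
    simpa using rhs_nonneg m α
  -- m ≥ 6400
  push_neg at hsmall
  have hεval : epsFun m = 40 / Real.sqrt m := by rw [epsFun, if_neg (by omega)]
  have hsqm : (80:ℝ) ≤ Real.sqrt m := by
    rw [Real.le_sqrt (by norm_num) (Nat.cast_nonneg _)]
    norm_num
    exact_mod_cast (by omega : (6400:ℕ) ≤ m)
  have hsqmpos : (0:ℝ) < Real.sqrt m := by linarith
  set ε := epsFun m with hε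
  have hεpos : 0 < ε := by rw [hεval]; positivity
  have hεhalf : ε ≤ 1/2 := by
    rw [hεval, div_le_iff₀ hsqmpos]; linarith
  by_cases hbig : 1/2 ≤ α^2
  · have h1 : 1 - 2*α^2 ≤ 0 := by nlinarith
    have h2 : 0 ≤ 1 - ε := by linarith
    calc (1 - ε) * (1 - 2*α^2) ≤ 0 := mul_nonpos_of_nonneg_of_nonpos h2 h1
      _ ≤ _ := rhs_nonneg m α
  push_neg at hbig
  -- main case
  set a := α^2 with ha
  have ha0 : 0 < a := by positivity
  obtain ⟨n, hn⟩ : ∃ n, m = 2*n := by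
    obtain ⟨k, hk⟩ := hm; exact ⟨k, by omega⟩
  subst hn
  have hn3200 : 3200 ≤ n := by omega
  set u := Real.sqrt n with hu
  have hu56 : (56:ℝ) ≤ u := by
    rw [hu, Real.le_sqrt (by norm_num) (Nat.cast_nonneg _)]
    norm_num
    exact_mod_cast (by omega : (3136:ℕ) ≤ n)
  have hupos : (0:ℝ) < u := by linarith
  have huu : u * u = (n:ℝ) := Real.mul_self_sqrt (Nat.cast_nonneg _)
  have hmcast : ((2*n : ℕ):ℝ) = 2 * (n:ℝ) := by push_cast; ring
  have hnpos : (0:ℝ) < n := by nlinarith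
  -- r
  set r := ⌈α * Real.sqrt ((2*n : ℕ):ℝ)⌉₊ with hr
  have hxpos : 0 < α * Real.sqrt ((2*n : ℕ):ℝ) := by positivity
  have hr1 : 1 ≤ r := Nat.one_le_iff_ne_zero.mpr (by
    simp only [hr, ne_eq, Nat.ceil_eq_zero, not_le]; positivity)
  have hxr : α * Real.sqrt ((2*n : ℕ):ℝ) ≤ (r:ℝ) := Nat.le_ceil _
  have hrlt : (r:ℝ) < α * Real.sqrt ((2*n : ℕ):ℝ) + 1 := Nat.ceil_lt_add_one (le_of_lt hxpos)
  have hsq_am : (α * Real.sqrt ((2*n : ℕ):ℝ))^2 = 2 * a * (n:ℝ) := by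
    rw [mul_pow, Real.sq_sqrt (Nat.cast_nonneg _), hmcast, ha]; ring
  have hamu : α * Real.sqrt ((2*n : ℕ):ℝ) < u := by
    rw [hu, Real.lt_sqrt (le_of_lt hxpos)]
    rw [hsq_am]
    have h2a : 2*a < 1 := by linarith
    have := mul_lt_mul_of_pos_right h2a hnpos
    linarith
  have hru1 : (r:ℝ) < u + 1 := by linarith
  have hrn : r ≤ n := by
    have h1 : u ≤ (n:ℝ) := by
      have h2 := mul_le_mul_of_nonneg_right (show (1:ℝ) ≤ u by linarith) (le_of_lt hupos)
      rw [one_mul, huu] at h2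
      exact h2
    have : (r:ℝ) < (n:ℝ) + 1 := by linarith
    exact_mod_cast Nat.lt_succ_iff.mp (by exact_mod_cast this)
  -- s
  set s := ⌊(r:ℝ)/Real.sqrt 2⌋₊ with hs
  have hsqrt2 : (1:ℝ) ≤ Real.sqrt 2 ∧ Real.sqrt 2 ≤ 1.5 := by
    constructor
    · rw [show (1:ℝ) = Real.sqrt 1 from (Real.sqrt_one).symm]
      exact Real.sqrt_le_sqrt (by norm_num)
    · rw [show (1.5:ℝ) = Real.sqrt (1.5^2) from (Real.sqrt_sq (by norm_num)).symm]
      exact Real.sqrt_le_sqrt (by norm_num)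
  have hsqrt2sq : Real.sqrt 2 ^ 2 = 2 := Real.sq_sqrt (by norm_num)
  have hsdiv : (0:ℝ) ≤ (r:ℝ)/Real.sqrt 2 := by positivity
  have hsle : (s:ℝ) ≤ (r:ℝ)/Real.sqrt 2 := Nat.floor_le hsdiv
  have hsgt : (r:ℝ)/Real.sqrt 2 - 1 < (s:ℝ) := Nat.sub_one_lt_floor _
  have hdivr : (r:ℝ)/Real.sqrt 2 ≤ (r:ℝ) := by
    have := div_le_div_of_nonneg_left (Nat.cast_nonneg (α := ℝ) r)
      (show (0:ℝ) < 1 by norm_num) hsqrt2.1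
    rwa [div_one] at this
  have hsr : s ≤ r := by
    have : (s:ℝ) ≤ (r:ℝ) := le_trans hsle hdivr
    exact_mod_cast this
  have hrs2 : ((r:ℝ)/Real.sqrt 2)^2 = (r:ℝ)^2/2 := by
    rw [div_pow, hsqrt2sq]
  have hs2 : (s:ℝ)^2 ≤ (r:ℝ)^2/2 := by
    rw [← hrs2]
    exact pow_le_pow_left₀ (Nat.cast_nonneg _) hsle 2
  have hs2' : (r:ℝ)^2 - (s:ℝ)^2 ≤ (r:ℝ)^2/2 + 2*(r:ℝ) := by
    rcases le_or_gt ((r:ℝ)/Real.sqrt 2) 1 with hc | hc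
    · have hrle2 : (r:ℝ) ≤ 1.5 := by
        rw [div_le_one (by linarith [hsqrt2.1])] at hc
        linarith [hsqrt2.2]
      have hr0 : (0:ℝ) ≤ (r:ℝ) := Nat.cast_nonneg _
      have hsq : (r:ℝ)*(r:ℝ) ≤ 1.5*(r:ℝ) := mul_le_mul_of_nonneg_right hrle2 hr0
      have hsqr : (r:ℝ)^2 ≤ 1.5*(r:ℝ) := by rw [sq]; exact hsq
      have hs0 : (0:ℝ) ≤ (s:ℝ)^2 := sq_nonneg _
      linarith
    · have hs0 : (0:ℝ) ≤ (r:ℝ)/Real.sqrt 2 - 1 := by linarith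
      have hle : ((r:ℝ)/Real.sqrt 2 - 1)^2 ≤ (s:ℝ)^2 :=
        pow_le_pow_left₀ hs0 (le_of_lt hsgt) 2
      have hexp : ((r:ℝ)/Real.sqrt 2 - 1)^2
          = ((r:ℝ)/Real.sqrt 2)^2 - 2*((r:ℝ)/Real.sqrt 2) + 1 := by ring
      have ht : (0:ℝ) ≤ (r:ℝ)/Real.sqrt 2 := hsdiv
      linarith [hrs2, hdivr]
  -- e
  set e := 6/u with he
  have hepos : 0 < e := by positivity
  have he8 : e ≤ 1/8 := by rw [he, div_le_iff₀ hupos]; linarith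
  -- r^2 bound
  have hrsq : (r:ℝ)^2 ≤ 2*a*(n:ℝ) + 3*u := by
    set x := α * Real.sqrt ((2*n : ℕ):ℝ) with hx
    have h1 : (r:ℝ)^2 ≤ (x + 1)^2 :=
      pow_le_pow_left₀ (Nat.cast_nonneg _) (le_of_lt hrlt) 2
    have hexp : (x+1)^2 = x^2 + 2*x + 1 := by ring
    have hx2 : x^2 = 2*a*(n:ℝ) := hsq_am
    linarith [hamu, hu56]
  have hkey1 : (r:ℝ)^2/(2*(n:ℝ)) ≤ a + 2/u := by
    rw [div_le_iff₀ (by positivity)]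
    have h4u : (2/u)*(2*(n:ℝ)) = 4*u := by
      rw [← huu]; field_simp; ring
    have hexp : (a + 2/u)*(2*(n:ℝ)) = 2*a*(n:ℝ) + (2/u)*(2*(n:ℝ)) := by ring
    rw [hexp, h4u]
    linarith
  -- sums
  have hsumA : ∑ j ∈ Finset.Ico 0 s, (2*(j:ℝ)+1)/((n:ℝ)+(j:ℝ)+1) ≤ a + e := by
    calc ∑ j ∈ Finset.Ico 0 s, (2*(j:ℝ)+1)/((n:ℝ)+(j:ℝ)+1)
        ≤ ((s:ℝ)^2 - (0:ℕ)^2)/n := sum_x_le n 0 s (by omega) (Nat.zero_le s)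
      _ ≤ (r:ℝ)^2/2/n := by
          apply (div_le_div_iff_of_pos_right hnpos).mpr
          push_cast; linarith
      _ ≤ a + 2/u := by rw [div_div]; exact hkey1
      _ ≤ a + e := by
          rw [he]
          have : (2:ℝ)/u ≤ 6/u := (div_le_div_iff_of_pos_right hupos).mpr (by norm_num)
          linarith
  have hsumB : ∑ j ∈ Finset.Ico s r, (2*(j:ℝ)+1)/((n:ℝ)+(j:ℝ)+1) ≤ a + e := by
    calc ∑ j ∈ Finset.Ico s r, (2*(j:ℝ)+1)/((n:ℝ)+(j:ℝ)+1)
        ≤ ((r:ℝ)^2 - (s:ℝ)^2)/n := sum_x_le n s r (by omega) hsr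
      _ ≤ ((r:ℝ)^2/2 + 2*(r:ℝ))/n := (div_le_div_iff_of_pos_right hnpos).mpr hs2'
      _ ≤ a + e := by
          rw [he, div_le_iff₀ hnpos]
          have h6u : (6/u)*(n:ℝ) = 6*u := by
            rw [← huu]; field_simp
          have hexp : (a + 6/u)*(n:ℝ) = a*(n:ℝ) + (6/u)*(n:ℝ) := by ring
          rw [hexp, h6u]
          have h2r : 2*(r:ℝ) ≤ 2*u + 2 := by linarith
          linarith
  -- pointwise bounds on factors
  have hxj : ∀ j ∈ Finset.Ico 0 r, 0 ≤ (2*(j:ℝ)+1)/((n:ℝ)+(j:ℝ)+1) ∧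
      (2*(j:ℝ)+1)/((n:ℝ)+(j:ℝ)+1) ≤ 1 := by
    intro j hj
    rw [Finset.mem_Ico] at hj
    have hjn : j < n := lt_of_lt_of_le hj.2 hrn
    have hjn' : (j:ℝ) ≤ (n:ℝ) := by exact_mod_cast le_of_lt hjn
    constructor
    · positivity
    · rw [div_le_one (by positivity)]; linarith
  have h1ae : (0:ℝ) ≤ 1 - a - e := by linarith [hbig]
  -- Weierstrass on each block
  have hprodA : 1 - a - e ≤ ∏ j ∈ Finset.Ico 0 s, (1 - (2*(j:ℝ)+1)/((n:ℝ)+(j:ℝ)+1)) := by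
    have := prod_one_sub_ge (Finset.Ico 0 s) (fun j => (2*(j:ℝ)+1)/((n:ℝ)+(j:ℝ)+1))
      (fun j hj => (hxj j (by rw [Finset.mem_Ico] at *; omega)).1)
      (fun j hj => (hxj j (by rw [Finset.mem_Ico] at *; omega)).2)
    linarith [hsumA]
  have hprodB : 1 - a - e ≤ ∏ j ∈ Finset.Ico s r, (1 - (2*(j:ℝ)+1)/((n:ℝ)+(j:ℝ)+1)) := by
    have := prod_one_sub_ge (Finset.Ico s r) (fun j => (2*(j:ℝ)+1)/((n:ℝ)+(j:ℝ)+1))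
      (fun j hj => (hxj j (by rw [Finset.mem_Ico] at *; omega)).1)
      (fun j hj => (hxj j (by rw [Finset.mem_Ico] at *; omega)).2)
    linarith [hsumB]
  have hsplit : (∏ j ∈ Finset.Ico 0 s, (1 - (2*(j:ℝ)+1)/((n:ℝ)+(j:ℝ)+1)))
      * (∏ j ∈ Finset.Ico s r, (1 - (2*(j:ℝ)+1)/((n:ℝ)+(j:ℝ)+1)))
      = ∏ j ∈ Finset.range r, (1 - (2*(j:ℝ)+1)/((n:ℝ)+(j:ℝ)+1)) := by
    rw [Finset.range_eq_Ico]
    exact Finset.prod_Ico_consecutive _ (Nat.zero_le s) hsr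
  have hP : (1 - a - e)^2 ≤ ∏ j ∈ Finset.range r, (1 - (2*(j:ℝ)+1)/((n:ℝ)+(j:ℝ)+1)) := by
    rw [← hsplit, sq]
    exact mul_le_mul hprodA hprodB h1ae (le_trans h1ae hprodA)
  -- epsilon estimates
  have hεe : 2*e ≤ ε*(1-ε) := by
    have hsm2 : Real.sqrt ((2*n : ℕ):ℝ) = Real.sqrt 2 * u := by
      rw [hmcast, Real.sqrt_mul (by norm_num), hu]
    have hεlb : 26/u ≤ ε := by
      rw [hεval, hsm2, div_le_div_iff₀ hupos (by positivity)]
      have := mul_le_mul_of_nonneg_right hsqrt2.2 (le_of_lt hupos)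
      have h26 := mul_le_mul_of_nonneg_left this (show (0:ℝ) ≤ 26 by norm_num)
      calc 26 * (Real.sqrt 2 * u) ≤ 26 * (1.5 * u) := h26
        _ ≤ 40 * u := by linarith
    have h2 : (26/u)*(1/2) ≤ ε*(1-ε) :=
      mul_le_mul hεlb (by linarith) (by norm_num) (le_of_lt hεpos)
    have h3 : 2*e = 12/u := by rw [he]; ring
    have h4 : (12:ℝ)/u ≤ 13/u := by
      apply (div_le_div_iff_of_pos_right hupos).mpr; norm_num
    calc 2*e = 12/u := h3
      _ ≤ 13/u := h4
      _ = (26/u)*(1/2) := by ring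
      _ ≤ ε*(1-ε) := h2
  -- final numeric inequality
  have hfinal : (1 - ε)*(1 - 2*a) ≤ (1 - a - e)^2 := by
    have hid : (1 - a - e)^2 - (1 - ε)*(1 - 2*a)
        = (a - ε)^2 + (ε*(1-ε) - 2*e) + 2*(a*e) + e^2 := by ring
    have h1 : (0:ℝ) ≤ (a - ε)^2 := sq_nonneg _
    have h2 : (0:ℝ) ≤ a*e := mul_nonneg (le_of_lt ha0) (le_of_lt hepos)
    have h3 : (0:ℝ) ≤ e^2 := sq_nonneg _
    linarith
  -- counting chain
  have hden : ((pathSet (2*n)).ncard : ℝ) = ((2*n).choose n : ℝ) := by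
    exact Nat.cast_inj.mpr (pathSet_ncard n) |>.trans rfl
  have hdenpos : (0:ℝ) < ((2*n).choose n : ℝ) := by
    exact_mod_cast Nat.choose_pos (by omega)
  have hnum : ((2*n).choose (n+r) : ℝ) ≤
      (({S ∈ pathSet (2*n) | α * Real.sqrt ((2*n : ℕ):ℝ) ≤ ((Set.range S).ncard : ℝ)}).ncard : ℝ) :=
    key_count n r hr1 hrn (α * Real.sqrt ((2*n : ℕ):ℝ)) (by linarith)
  have hratio : ((2*n).choose (n+r) : ℝ) / ((2*n).choose n : ℝ)
      = ∏ j ∈ Finset.range r, (1 - (2*(j:ℝ)+1)/((n:ℝ)+(j:ℝ)+1)) := by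
    rw [choose_prod n r hrn]
    exact mul_div_cancel_left₀ _ (ne_of_gt hdenpos)
  calc (1 - ε) * (1 - 2*a) ≤ (1 - a - e)^2 := hfinal
    _ ≤ ∏ j ∈ Finset.range r, (1 - (2*(j:ℝ)+1)/((n:ℝ)+(j:ℝ)+1)) := hP
    _ = ((2*n).choose (n+r) : ℝ) / ((2*n).choose n : ℝ) := hratio.symm
    _ ≤ (({S ∈ pathSet (2*n) | α * Real.sqrt ((2*n : ℕ):ℝ) ≤ ((Set.range S).ncard : ℝ)}).ncard : ℝ)
        / ((pathSet (2*n)).ncard : ℝ) := by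
      rw [hden]
      exact (div_le_div_iff_of_pos_right hdenpos).mpr hnum
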